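/- For every (q_1, q_2, q_3, q_4) ∈ ℂ⁴ there exists a unique formal power series f ∈ ℂ[[X]] such that: f has constant coefficient 0 and X-coefficient 1; f satisfies the Hirzebruch ODE with parameters (q_1, q_2, q_3); and the unique power series Q ∈ ℂ[[X]] with Q·f = X has coefficient of X^m equal to q_m for m = 1, 2, 3, 4. -/

import Mathlib

open PowerSeries

/-- `f` satisfies the Hirzebruch ODE `f f''' - 3 f' f'' = 6 q₁ (f')² + 12 q₂ f f' + 12 q₃ f²`. -/
def HirzebruchODE (q₁ q₂ q₃ : ℂ) (f : PowerSeries ℂ) : Prop :=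
  f * (d⁄dX ℂ) ((d⁄dX ℂ) ((d⁄dX ℂ) f)) - 3 * (d⁄dX ℂ) f * (d⁄dX ℂ) ((d⁄dX ℂ) f)
    = PowerSeries.C (6 * q₁) * ((d⁄dX ℂ) f) ^ 2
      + PowerSeries.C (12 * q₂) * f * (d⁄dX ℂ) f
      + PowerSeries.C (12 * q₃) * f ^ 2

namespace HirzAux

open Finset

/-- Coefficient sums appearing in the coefficient-`n` equation of the ODE. -/
noncomputable def T1 (b : ℕ → ℂ) (n : ℕ) : ℂ :=
  ∑ p ∈ antidiagonal n, (b (p.1 + 1) * ((p.1 : ℂ) + 1)) * (b (p.2 + 1) * ((p.2 : ℂ) + 1))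

noncomputable def T2 (b : ℕ → ℂ) (n : ℕ) : ℂ :=
  ∑ p ∈ antidiagonal n, b p.1 * (b (p.2 + 1) * ((p.2 : ℂ) + 1))

noncomputable def T3 (b : ℕ → ℂ) (n : ℕ) : ℂ :=
  ∑ p ∈ antidiagonal n, b p.1 * b p.2

noncomputable def S1 (b : ℕ → ℂ) (n : ℕ) : ℂ :=
  ∑ p ∈ antidiagonal n,
    b p.1 * (b (p.2 + 3) * ((p.2 : ℂ) + 3) * ((p.2 : ℂ) + 2) * ((p.2 : ℂ) + 1))

noncomputable def S2 (b : ℕ → ℂ) (n : ℕ) : ℂ :=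
  ∑ p ∈ antidiagonal n,
    (b (p.1 + 1) * ((p.1 : ℂ) + 1)) * (b (p.2 + 2) * ((p.2 : ℂ) + 2) * ((p.2 : ℂ) + 1))

noncomputable def S1' (b : ℕ → ℂ) (n : ℕ) : ℂ :=
  ∑ p ∈ (antidiagonal n).filter (fun p => 2 ≤ p.1),
    b p.1 * (b (p.2 + 3) * ((p.2 : ℂ) + 3) * ((p.2 : ℂ) + 2) * ((p.2 : ℂ) + 1))

noncomputable def S2' (b : ℕ → ℂ) (n : ℕ) : ℂ :=
  ∑ p ∈ (antidiagonal n).filter (fun p => 1 ≤ p.1),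
    (b (p.1 + 1) * ((p.1 : ℂ) + 1)) * (b (p.2 + 2) * ((p.2 : ℂ) + 2) * ((p.2 : ℂ) + 1))

/-- That part of the coefficient-`n` equation which involves only `b k` for `k ≤ n + 1`. -/
noncomputable def G (q₁ q₂ q₃ : ℂ) (b : ℕ → ℂ) (n : ℕ) : ℂ :=
  6 * q₁ * T1 b n + 12 * q₂ * T2 b n + 12 * q₃ * T3 b n + 3 * S2' b n - S1' b n

/-- The coefficient-`n` equation of the ODE. -/
def E (q₁ q₂ q₃ : ℂ) (b : ℕ → ℂ) (n : ℕ) : Prop :=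
  S1 b n - 3 * S2 b n = 6 * q₁ * T1 b n + 12 * q₂ * T2 b n + 12 * q₃ * T3 b n

lemma S2_split (b : ℕ → ℂ) (hb1 : b 1 = 1) (n : ℕ) :
    S2 b n = ((n : ℂ) + 2) * ((n : ℂ) + 1) * b (n + 2) + S2' b n := by
  have hsplit := Finset.sum_filter_add_sum_filter_not (antidiagonal n) (fun p => 1 ≤ p.1)
    (fun p => (b (p.1 + 1) * ((p.1 : ℂ) + 1)) * (b (p.2 + 2) * ((p.2 : ℂ) + 2) * ((p.2 : ℂ) + 1)))
  have hset : (antidiagonal n).filter (fun p => ¬ 1 ≤ p.1) = {(0, n)} := by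
    ext p
    simp only [Finset.mem_filter, Finset.HasAntidiagonal.mem_antidiagonal, Finset.mem_singleton, Prod.ext_iff]
    omega
  rw [S2, S2', ← hsplit, hset, Finset.sum_singleton]
  simp only [hb1]
  push_cast
  ring

lemma S1_split (b : ℕ → ℂ) (hb0 : b 0 = 0) (hb1 : b 1 = 1) (n : ℕ) :
    S1 b n = ((n : ℂ) + 2) * ((n : ℂ) + 1) * (n : ℂ) * b (n + 2) + S1' b n := by
  have hsplit := Finset.sum_filter_add_sum_filter_not (antidiagonal n) (fun p => 2 ≤ p.1)
    (fun p => b p.1 * (b (p.2 + 3) * ((p.2 : ℂ) + 3) * ((p.2 : ℂ) + 2) * ((p.2 : ℂ) + 1)))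
  rcases n with _ | m
  · have hset : (antidiagonal 0).filter (fun p : ℕ × ℕ => ¬ 2 ≤ p.1) = {(0, 0)} := by
      ext p
      simp only [Finset.mem_filter, Finset.HasAntidiagonal.mem_antidiagonal, Finset.mem_singleton, Prod.ext_iff]
      omega
    have hset2 : (antidiagonal 0).filter (fun p : ℕ × ℕ => 2 ≤ p.1) = ∅ := by
      ext p
      simp only [Finset.mem_filter, Finset.HasAntidiagonal.mem_antidiagonal, Finset.notMem_empty, iff_false,
        not_and]
      omega
    rw [S1, S1', ← hsplit, hset, hset2, Finset.sum_singleton, Finset.sum_empty]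
    simp [hb0]
  · have hset : (antidiagonal (m + 1)).filter (fun p : ℕ × ℕ => ¬ 2 ≤ p.1)
        = {(0, m + 1), (1, m)} := by
      ext p
      simp only [Finset.mem_filter, Finset.HasAntidiagonal.mem_antidiagonal, Finset.mem_insert,
        Finset.mem_singleton, Prod.ext_iff]
      omega
    have hne : ((0, m + 1) : ℕ × ℕ) ∉ ({(1, m)} : Finset (ℕ × ℕ)) := by simp
    rw [S1, S1', ← hsplit, hset, Finset.sum_insert hne, Finset.sum_singleton]
    simp only [hb0, hb1, zero_mul]
    push_cast
    ring

lemma E_iff (q₁ q₂ q₃ : ℂ) (b : ℕ → ℂ) (hb0 : b 0 = 0) (hb1 : b 1 = 1) (n : ℕ) :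
    E q₁ q₂ q₃ b n ↔
      ((n : ℂ) + 2) * ((n : ℂ) + 1) * ((n : ℂ) - 3) * b (n + 2) = G q₁ q₂ q₃ b n := by
  rw [E, S1_split b hb0 hb1 n, S2_split b hb1 n, G]
  constructor <;> intro h <;> linear_combination h

lemma G_congr (q₁ q₂ q₃ : ℂ) (b b' : ℕ → ℂ) (n : ℕ) (h : ∀ k ≤ n + 1, b k = b' k) :
    G q₁ q₂ q₃ b n = G q₁ q₂ q₃ b' n := by
  have h1 : T1 b n = T1 b' n := Finset.sum_congr rfl fun p hp => by
    rw [Finset.HasAntidiagonal.mem_antidiagonal] at hp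
    rw [h (p.1 + 1) (by omega), h (p.2 + 1) (by omega)]
  have h2 : T2 b n = T2 b' n := Finset.sum_congr rfl fun p hp => by
    rw [Finset.HasAntidiagonal.mem_antidiagonal] at hp
    rw [h p.1 (by omega), h (p.2 + 1) (by omega)]
  have h3 : T3 b n = T3 b' n := Finset.sum_congr rfl fun p hp => by
    rw [Finset.HasAntidiagonal.mem_antidiagonal] at hp
    rw [h p.1 (by omega), h p.2 (by omega)]
  have h4 : S2' b n = S2' b' n := Finset.sum_congr rfl fun p hp => by
    rw [Finset.mem_filter, Finset.HasAntidiagonal.mem_antidiagonal] at hp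
    rw [h (p.1 + 1) (by omega), h (p.2 + 2) (by omega)]
  have h5 : S1' b n = S1' b' n := Finset.sum_congr rfl fun p hp => by
    rw [Finset.mem_filter, Finset.HasAntidiagonal.mem_antidiagonal] at hp
    rw [h p.1 (by omega), h (p.2 + 3) (by omega)]
  rw [G, G, h1, h2, h3, h4, h5]

/-- The coefficient sequence of the solution. -/
noncomputable def aa (q₁ q₂ q₃ q₄ : ℂ) : ℕ → ℂ
  | 0 => 0
  | 1 => 1
  | 2 => -q₁
  | 3 => q₁ ^ 2 - q₂
  | 4 => -q₁ ^ 3 + 2 * q₁ * q₂ - q₃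
  | 5 => -q₄ - q₁ * (-q₁ ^ 3 + 2 * q₁ * q₂ - q₃) - q₂ * (q₁ ^ 2 - q₂) - q₃ * (-q₁)
  | n + 6 => G q₁ q₂ q₃ (fun k => if h : k < n + 6 then aa q₁ q₂ q₃ q₄ k else 0) (n + 4)
      / (((n : ℂ) + 6) * ((n : ℂ) + 5) * ((n : ℂ) + 1))
  termination_by n => n

variable (q₁ q₂ q₃ q₄ : ℂ)

lemma aa_zero : aa q₁ q₂ q₃ q₄ 0 = 0 := by rw [aa]
lemma aa_one : aa q₁ q₂ q₃ q₄ 1 = 1 := by rw [aa]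
lemma aa_two : aa q₁ q₂ q₃ q₄ 2 = -q₁ := by rw [aa]
lemma aa_three : aa q₁ q₂ q₃ q₄ 3 = q₁ ^ 2 - q₂ := by rw [aa]
lemma aa_four : aa q₁ q₂ q₃ q₄ 4 = -q₁ ^ 3 + 2 * q₁ * q₂ - q₃ := by rw [aa]
lemma aa_five : aa q₁ q₂ q₃ q₄ 5
    = -q₄ - q₁ * (-q₁ ^ 3 + 2 * q₁ * q₂ - q₃) - q₂ * (q₁ ^ 2 - q₂) - q₃ * (-q₁) := by rw [aa]

lemma aa_rec (n : ℕ) : aa q₁ q₂ q₃ q₄ (n + 6)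
    = G q₁ q₂ q₃ (aa q₁ q₂ q₃ q₄) (n + 4) / (((n : ℂ) + 6) * ((n : ℂ) + 5) * ((n : ℂ) + 1)) := by
  rw [aa]
  congr 1
  exact G_congr q₁ q₂ q₃ _ _ (n + 4) fun k hk => by rw [dif_pos (by omega)]

lemma E_aa_of_ge (n : ℕ) : E q₁ q₂ q₃ (aa q₁ q₂ q₃ q₄) (n + 4) := by
  rw [E_iff _ _ _ _ (aa_zero q₁ q₂ q₃ q₄) (aa_one q₁ q₂ q₃ q₄)]
  have h6 : ((n : ℂ) + 6) ≠ 0 := by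
    have : ((n + 6 : ℕ) : ℂ) ≠ 0 := Nat.cast_ne_zero.mpr (by omega)
    push_cast at this; exact this
  have h5 : ((n : ℂ) + 5) ≠ 0 := by
    have : ((n + 5 : ℕ) : ℂ) ≠ 0 := Nat.cast_ne_zero.mpr (by omega)
    push_cast at this; exact this
  have h1 : ((n : ℂ) + 1) ≠ 0 := by
    have : ((n + 1 : ℕ) : ℂ) ≠ 0 := Nat.cast_ne_zero.mpr (by omega)
    push_cast at this; exact this
  have : (n + 4 + 2) = n + 6 := by omega
  rw [this, aa_rec]
  push_cast
  field_simp
  ring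

lemma E_aa_small (n : ℕ) (hn : n < 4) : E q₁ q₂ q₃ (aa q₁ q₂ q₃ q₄) n := by
  interval_cases n <;>
  · simp only [E, S1, S2, T1, T2, T3, Finset.Nat.sum_antidiagonal_eq_sum_range_succ_mk,
      Finset.sum_range_succ, Finset.sum_range_zero]
    norm_num [aa_zero, aa_one, aa_two, aa_three, aa_four, aa_five]
    ring

lemma E_aa (n : ℕ) : E q₁ q₂ q₃ (aa q₁ q₂ q₃ q₄) n := by
  rcases Nat.lt_or_ge n 4 with h | h
  · exact E_aa_small q₁ q₂ q₃ q₄ n h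
  · obtain ⟨m, rfl⟩ : ∃ m, n = m + 4 := ⟨n - 4, by omega⟩
    exact E_aa_of_ge q₁ q₂ q₃ q₄ m

lemma coeff_lhs (f : PowerSeries ℂ) (n : ℕ) :
    PowerSeries.coeff n
        (f * (d⁄dX ℂ) ((d⁄dX ℂ) ((d⁄dX ℂ) f)) - 3 * (d⁄dX ℂ) f * (d⁄dX ℂ) ((d⁄dX ℂ) f))
      = S1 (fun k => PowerSeries.coeff k f) n - 3 * S2 (fun k => PowerSeries.coeff k f) n := by
  rw [map_sub]
  congr 1
  · rw [PowerSeries.coeff_mul, S1]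
    refine Finset.sum_congr rfl fun p hp => ?_
    simp only [PowerSeries.coeff_derivative]
    push_cast
    ring
  · rw [show (3 : PowerSeries ℂ) * (d⁄dX ℂ) f * (d⁄dX ℂ) ((d⁄dX ℂ) f)
        = PowerSeries.C 3 * ((d⁄dX ℂ) f * (d⁄dX ℂ) ((d⁄dX ℂ) f)) by rw [map_ofNat]; ring,
      PowerSeries.coeff_C_mul, PowerSeries.coeff_mul, S2]
    simp only [Finset.mul_sum]
    refine Finset.sum_congr rfl fun p hp => ?_
    simp only [PowerSeries.coeff_derivative]
    push_cast
    ring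

lemma coeff_rhs (f : PowerSeries ℂ) (n : ℕ) :
    PowerSeries.coeff n
        (PowerSeries.C (6 * q₁) * ((d⁄dX ℂ) f) ^ 2
          + PowerSeries.C (12 * q₂) * f * (d⁄dX ℂ) f
          + PowerSeries.C (12 * q₃) * f ^ 2)
      = 6 * q₁ * T1 (fun k => PowerSeries.coeff k f) n
        + 12 * q₂ * T2 (fun k => PowerSeries.coeff k f) n
        + 12 * q₃ * T3 (fun k => PowerSeries.coeff k f) n := by
  rw [map_add, map_add]
  congr 1
  · congr 1
    · rw [pow_two, PowerSeries.coeff_C_mul, PowerSeries.coeff_mul, T1]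
      simp only [Finset.mul_sum]
      try refine Finset.sum_congr rfl fun p hp => ?_
      try simp only [PowerSeries.coeff_derivative]
      try push_cast
      try ring
    · rw [mul_assoc, PowerSeries.coeff_C_mul, PowerSeries.coeff_mul, T2]
      simp only [Finset.mul_sum]
      try refine Finset.sum_congr rfl fun p hp => ?_
      try simp only [PowerSeries.coeff_derivative]
      try push_cast
      try ring
  · rw [pow_two, PowerSeries.coeff_C_mul, PowerSeries.coeff_mul, T3]
    try simp only [Finset.mul_sum]

lemma ode_iff (f : PowerSeries ℂ) :
    HirzebruchODE q₁ q₂ q₃ f ↔ ∀ n, E q₁ q₂ q₃ (fun k => PowerSeries.coeff k f) n := by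
  rw [HirzebruchODE, PowerSeries.ext_iff]
  refine forall_congr' fun n => ?_
  rw [coeff_lhs, coeff_rhs, E]

end HirzAux

/-- For each `(q₁, q₂, q₃, q₄) ∈ ℂ⁴` there is a unique series solution
`f = z + f₁ z² + …` of the Hirzebruch ODE with parameters `(q₁, q₂, q₃)` whose `Q`-series
`Q = z/f` has initial coefficients `q₁, q₂, q₃, q₄`. -/
theorem hirzebruch_ODE_unique_series_solution (q₁ q₂ q₃ q₄ : ℂ) :
    ∃! f : PowerSeries ℂ,
      PowerSeries.constantCoeff f = 0 ∧
      PowerSeries.coeff 1 f = 1 ∧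
      HirzebruchODE q₁ q₂ q₃ f ∧
      ∃ Q : PowerSeries ℂ, Q * f = PowerSeries.X ∧
        PowerSeries.coeff 1 Q = q₁ ∧ PowerSeries.coeff 2 Q = q₂ ∧
        PowerSeries.coeff 3 Q = q₃ ∧ PowerSeries.coeff 4 Q = q₄ := by
  classical
  open HirzAux in
  refine ⟨PowerSeries.mk (aa q₁ q₂ q₃ q₄), ⟨?_, ?_, ?_, ?_⟩, ?_⟩
  · rw [← PowerSeries.coeff_zero_eq_constantCoeff, PowerSeries.coeff_mk, HirzAux.aa_zero]
  · rw [PowerSeries.coeff_mk, HirzAux.aa_one]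
  · rw [HirzAux.ode_iff]
    intro n
    have : (fun k => PowerSeries.coeff k (PowerSeries.mk (aa q₁ q₂ q₃ q₄)))
        = aa q₁ q₂ q₃ q₄ := funext fun k => PowerSeries.coeff_mk k _
    rw [this]
    exact HirzAux.E_aa q₁ q₂ q₃ q₄ n
  · -- the Q-series
    set u : PowerSeries ℂ := PowerSeries.mk (fun k => aa q₁ q₂ q₃ q₄ (k + 1)) with hu
    have hu0 : PowerSeries.constantCoeff u ≠ 0 := by
      rw [hu, PowerSeries.constantCoeff_mk, HirzAux.aa_one]
      exact one_ne_zero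
    have hQu : u⁻¹ * u = 1 := PowerSeries.inv_mul_cancel u hu0
    have hfX : PowerSeries.mk (aa q₁ q₂ q₃ q₄) = PowerSeries.X * u := by
      ext n
      cases n with
      | zero => simp [hu, HirzAux.aa_zero]
      | succ n => rw [PowerSeries.coeff_succ_X_mul, PowerSeries.coeff_mk, hu,
          PowerSeries.coeff_mk]
    have hc : ∀ k : ℕ, (∑ p ∈ Finset.HasAntidiagonal.antidiagonal k,
        PowerSeries.coeff p.1 u⁻¹ * PowerSeries.coeff p.2 u)
          = PowerSeries.coeff k (1 : PowerSeries ℂ) := fun k => by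
      rw [← PowerSeries.coeff_mul, hQu]
    have cu : ∀ k, PowerSeries.coeff k u = aa q₁ q₂ q₃ q₄ (k + 1) := fun k => by
      rw [hu, PowerSeries.coeff_mk]
    have h0' : PowerSeries.constantCoeff u⁻¹ = 1 := by
      rw [PowerSeries.constantCoeff_inv, hu, PowerSeries.constantCoeff_mk, HirzAux.aa_one,
        inv_one]
    have h0 : PowerSeries.coeff 0 u⁻¹ = 1 := by
      rw [PowerSeries.coeff_zero_eq_constantCoeff, h0']
    have e1 := hc 1
    have e2 := hc 2
    have e3 := hc 3
    have e4 := hc 4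
    simp only [Finset.Nat.sum_antidiagonal_eq_sum_range_succ_mk, Finset.sum_range_succ,
      Finset.sum_range_zero, PowerSeries.coeff_one] at e1 e2 e3 e4
    norm_num [cu, h0, h0', HirzAux.aa_one, HirzAux.aa_two, HirzAux.aa_three, HirzAux.aa_four,
      HirzAux.aa_five] at e1 e2 e3 e4
    have h1 : PowerSeries.coeff 1 u⁻¹ = q₁ := by linear_combination e1
    rw [h1] at e2 e3 e4
    have h2 : PowerSeries.coeff 2 u⁻¹ = q₂ := by linear_combination e2
    rw [h2] at e3 e4
    have h3 : PowerSeries.coeff 3 u⁻¹ = q₃ := by linear_combination e3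
    rw [h3] at e4
    have h4 : PowerSeries.coeff 4 u⁻¹ = q₄ := by linear_combination e4
    refine ⟨u⁻¹, ?_, h1, h2, h3, h4⟩
    rw [hfX, show u⁻¹ * (PowerSeries.X * u) = PowerSeries.X * (u⁻¹ * u) by ring, hQu, mul_one]
  · -- uniqueness
    rintro g ⟨hg0, hg1, hgode, Qg, hQg, hq1, hq2, hq3, hq4⟩
    have hb0 : PowerSeries.coeff 0 g = 0 := by
      rw [PowerSeries.coeff_zero_eq_constantCoeff, hg0]
    have hEb := (HirzAux.ode_iff q₁ q₂ q₃ g).mp hgode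
    have key : ∀ n, PowerSeries.coeff n g = aa q₁ q₂ q₃ q₄ n := by
      intro n
      induction n using Nat.strong_induction_on with
      | _ n ih =>
        match n with
        | 0 => rw [hb0, HirzAux.aa_zero]
        | 1 => rw [hg1, HirzAux.aa_one]
        | (m + 2) =>
          by_cases hm : m = 3
          · -- coefficient 5, determined by the Q-series
            subst hm
            have hck : ∀ k : ℕ, (∑ p ∈ Finset.HasAntidiagonal.antidiagonal k,
                PowerSeries.coeff p.1 Qg * PowerSeries.coeff p.2 g)
                  = PowerSeries.coeff k PowerSeries.X := fun k => by
              rw [← PowerSeries.coeff_mul, hQg]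
            have e1 := hck 1
            have e5 := hck 5
            have hb2 := ih 2 (by omega)
            have hb3 := ih 3 (by omega)
            have hb4 := ih 4 (by omega)
            simp only [Finset.Nat.sum_antidiagonal_eq_sum_range_succ_mk, Finset.sum_range_succ,
              Finset.sum_range_zero, PowerSeries.coeff_X] at e1 e5
            norm_num [hb0, hg1] at e1 e5
            rw [hq1, hq2, hq3, hq4, hb2, hb3, hb4, e1, HirzAux.aa_two, HirzAux.aa_three,
              HirzAux.aa_four] at e5
            rw [HirzAux.aa_five]
            linear_combination e5
          · have hδ : (((m : ℂ) + 2) * ((m : ℂ) + 1) * ((m : ℂ) - 3)) ≠ 0 := by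
              have c2 : ((m : ℂ) + 2) ≠ 0 := by
                have : ((m + 2 : ℕ) : ℂ) ≠ 0 := Nat.cast_ne_zero.mpr (by omega)
                push_cast at this; exact this
              have c1 : ((m : ℂ) + 1) ≠ 0 := by
                have : ((m + 1 : ℕ) : ℂ) ≠ 0 := Nat.cast_ne_zero.mpr (by omega)
                push_cast at this; exact this
              have c3 : ((m : ℂ) - 3) ≠ 0 := by
                refine sub_ne_zero.mpr ?_
                exact_mod_cast hm
              exact mul_ne_zero (mul_ne_zero c2 c1) c3
            have hE1 := (HirzAux.E_iff q₁ q₂ q₃ _ hb0 hg1 m).mp (hEb m)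
            have hE2 := (HirzAux.E_iff q₁ q₂ q₃ _ (HirzAux.aa_zero q₁ q₂ q₃ q₄)
              (HirzAux.aa_one q₁ q₂ q₃ q₄) m).mp (HirzAux.E_aa q₁ q₂ q₃ q₄ m)
            have hG : HirzAux.G q₁ q₂ q₃ (fun k => PowerSeries.coeff k g) m
                = HirzAux.G q₁ q₂ q₃ (aa q₁ q₂ q₃ q₄) m :=
              HirzAux.G_congr q₁ q₂ q₃ _ _ m fun k hk => ih k (by omega)
            exact mul_left_cancel₀ hδ (hE1.trans (hG.trans hE2.symm))
    exact PowerSeries.ext fun n => by rw [key n, PowerSeries.coeff_mk]
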